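/- Let Γ be a graph in [l] and let p be a prime with p ∉ {2, 3}. Then every p-cocycle η : A(Γ) → 𝔽_p is constant on A(Γ); that is, β_p(Γ) = 0. -/

import Mathlib

open scoped Classical

noncomputable section

/-- A (candidate) hyperplane in `ℂ^l`: a submodule of `Fin l → ℂ`. -/
abbrev Hyp (l : ℕ) := Submodule ℂ (Fin l → ℂ)

/-- `X` is a rank-2 flat of the central arrangement `A`. -/
def IsRank2Flat {l : ℕ} (A : Finset (Hyp l)) (X : Hyp l) : Prop :=
  ∃ H ∈ A, ∃ K ∈ A, H ≠ K ∧ X = H ⊓ K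

/-- The hyperplanes of `A` containing the flat `X` (so `m_X = (flatHyps A X).card`). -/
def flatHyps {l : ℕ} (A : Finset (Hyp l)) (X : Hyp l) : Finset {H // H ∈ A} :=
  A.attach.filter fun L => X ≤ (L : Hyp l)

/-- `η : A → 𝔽_p` is a `p`-cocycle: for every rank-2 flat `X`, the sum of `η` over `A_X`
vanishes when `p ∣ m_X`, and `η` is constant on `A_X` when `p ∤ m_X`. -/
def IsCocycle {l : ℕ} (p : ℕ) (A : Finset (Hyp l)) (η : {H // H ∈ A} → ZMod p) : Prop :=
  ∀ X : Hyp l, IsRank2Flat A X →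
    ((p ∣ (flatHyps A X).card → ∑ L ∈ flatHyps A X, η L = 0) ∧
     (¬ p ∣ (flatHyps A X).card →
       ∀ H ∈ flatHyps A X, ∀ K ∈ flatHyps A X, η H = η K))

/-- The rank of a central arrangement in `ℂ^l`: the codimension of the intersection of
all its hyperplanes. -/
def arrRank {l : ℕ} (A : Finset (Hyp l)) : ℕ :=
  l - Module.finrank ℂ ↥(A.inf id)

/-- A graph `Γ` in `[l]`: loops `E₁(Γ) ⊆ [l]`, and signed edges `ij^ε` (recorded with
`i < j`, the sign `ε` encoded by a `Bool`: `true ↦ +1`, `false ↦ -1`); a pair `{i,j}`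
may carry one signed edge (a simple edge) or both (a double edge). -/
structure SGraph (l : ℕ) where
  loops : Finset (Fin l)
  edges : Finset (Fin l × Fin l × Bool)
  edges_lt : ∀ e ∈ edges, e.1 < e.2.1

/-- The hyperplane `x_i = 0` of a loop at `i`. -/
def loopHyp {l : ℕ} (i : Fin l) : Hyp l :=
  LinearMap.ker (LinearMap.proj i : (Fin l → ℂ) →ₗ[ℂ] ℂ)

/-- The hyperplane `x_i + ε·x_j = 0` of a signed edge `ij^ε`. -/
def edgeHyp {l : ℕ} (i j : Fin l) (b : Bool) : Hyp l :=
  LinearMap.ker ((LinearMap.proj i : (Fin l → ℂ) →ₗ[ℂ] ℂ)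
    + (if b then (1 : ℂ) else -1) • (LinearMap.proj j : (Fin l → ℂ) →ₗ[ℂ] ℂ))

/-- The graphic arrangement `A(Γ)` in `ℂ^l`. -/
def graphArr {l : ℕ} (G : SGraph l) : Finset (Hyp l) :=
  G.loops.image loopHyp ∪ G.edges.image fun e => edgeHyp e.1 e.2.1 e.2.2

/-- The (unordered) signed edge `ij^ε` belongs to `Γ`. -/
def SGraph.hasEdge {l : ℕ} (G : SGraph l) (i j : Fin l) (b : Bool) : Prop :=
  (i, j, b) ∈ G.edges ∨ (j, i, b) ∈ G.edges

def lform {l : ℕ} (c : Fin l → ℂ) : (Fin l → ℂ) →ₗ[ℂ] ℂ :=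
  ∑ i, c i • LinearMap.proj i

lemma lform_apply {l : ℕ} (c x : Fin l → ℂ) : lform c x = ∑ i, c i * x i := by
  simp [lform]

lemma lform_apply_single {l : ℕ} (c : Fin l → ℂ) (k : Fin l) :
    lform c (Pi.single k 1) = c k := by
  rw [lform_apply]
  simp [Pi.single_apply]

lemma lform_single {l : ℕ} (i : Fin l) :
    lform (Pi.single i (1:ℂ)) = (LinearMap.proj i : (Fin l → ℂ) →ₗ[ℂ] ℂ) := by
  apply LinearMap.ext; intro x
  rw [lform_apply]
  simp [Pi.single_apply, ite_mul]

lemma lform_edge {l : ℕ} (i j : Fin l) (ε : ℂ) :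
    lform (Pi.single i 1 + ε • (Pi.single j 1 : Fin l → ℂ))
      = (LinearMap.proj i : (Fin l → ℂ) →ₗ[ℂ] ℂ) + ε • LinearMap.proj j := by
  apply LinearMap.ext; intro x
  rw [LinearMap.add_apply, LinearMap.smul_apply, lform_apply]
  simp only [Pi.add_apply, Pi.smul_apply, Pi.single_apply, smul_eq_mul,
    LinearMap.proj_apply]
  rw [Finset.sum_congr rfl (fun k _ => by ring_nf : ∀ k ∈ Finset.univ,
    ((if k = i then (1:ℂ) else 0) + ε * if k = j then 1 else 0) * x k
      = (if k = i then (1:ℂ) else 0) * x k + ε * ((if k = j then 1 else 0) * x k)),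
    Finset.sum_add_distrib]
  simp [ite_mul, ← Finset.mul_sum]

lemma ker_le_span1 {V : Type*} [AddCommGroup V] [Module ℂ V] (g h : V →ₗ[ℂ] ℂ)
    (hle : ∀ y, g y = 0 → h y = 0) : ∃ c : ℂ, h = c • g := by
  by_cases hg : ∃ x, g x ≠ 0
  · obtain ⟨x, hx⟩ := hg
    refine ⟨h x / g x, ?_⟩
    apply LinearMap.ext; intro y
    have h1 : g (y - (g y / g x) • x) = 0 := by
      simp only [map_sub, map_smul, smul_eq_mul]
      field_simp
      ring
    have h2 := hle _ h1
    simp only [map_sub, map_smul, smul_eq_mul] at h2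
    simp only [LinearMap.smul_apply, smul_eq_mul]
    field_simp at h2 ⊢
    linear_combination h2
  · push_neg at hg
    refine ⟨0, ?_⟩
    apply LinearMap.ext; intro y
    simp [hle y (hg y)]

lemma ker_le_span2 {V : Type*} [AddCommGroup V] [Module ℂ V] (f g h : V →ₗ[ℂ] ℂ)
    (hle : LinearMap.ker f ⊓ LinearMap.ker g ≤ LinearMap.ker h) :
    ∃ a b : ℂ, h = a • f + b • g := by
  by_cases hf : ∃ x, f x ≠ 0
  · obtain ⟨x, hx⟩ := hf
    have key : ∀ y, (g - (g x / f x) • f) y = 0 → (h - (h x / f x) • f) y = 0 := by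
      intro y hy
      simp only [LinearMap.sub_apply, LinearMap.smul_apply, smul_eq_mul] at hy ⊢
      field_simp at hy
      have hz : f x • y - f y • x ∈ LinearMap.ker f ⊓ LinearMap.ker g := by
        refine Submodule.mem_inf.mpr ⟨?_, ?_⟩
        · simp only [LinearMap.mem_ker, map_sub, map_smul, smul_eq_mul]
          ring
        · simp only [LinearMap.mem_ker, map_sub, map_smul, smul_eq_mul]
          linear_combination hy
      have h3 := hle hz
      simp only [LinearMap.mem_ker, map_sub, map_smul, smul_eq_mul] at h3
      field_simp
      linear_combination h3
    obtain ⟨c, hc⟩ := ker_le_span1 _ _ key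
    refine ⟨h x / f x - c * (g x / f x), c, ?_⟩
    apply LinearMap.ext; intro y
    have hy := congrArg (fun φ => φ y) hc
    simp only [LinearMap.sub_apply, LinearMap.smul_apply, smul_eq_mul,
      LinearMap.add_apply] at hy ⊢
    linear_combination hy
  · push_neg at hf
    have hgh : ∀ y, g y = 0 → h y = 0 := by
      intro y hy
      exact hle ⟨by simp [LinearMap.mem_ker, hf y], hy⟩
    obtain ⟨c, hc⟩ := ker_le_span1 _ _ hgh
    exact ⟨0, c, by simp [hc]⟩

def SpecialN {l : ℕ} (c : Fin l → ℂ) : Prop :=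
  (∃ i, c = Pi.single i 1) ∨
  (∃ i j : Fin l, ∃ ε : ℂ, i < j ∧ (ε = 1 ∨ ε = -1) ∧
    c = (Pi.single i 1 : Fin l → ℂ) + ε • (Pi.single j 1 : Fin l → ℂ))

lemma edge_apply_left {l : ℕ} {i j : Fin l} (hij : i ≠ j) (ε : ℂ) :
    ((Pi.single i 1 : Fin l → ℂ) + ε • (Pi.single j 1 : Fin l → ℂ)) i = 1 := by
  simp [Pi.single_eq_of_ne hij]

lemma edge_apply_right {l : ℕ} {i j : Fin l} (hij : i ≠ j) (ε : ℂ) :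
    ((Pi.single i 1 : Fin l → ℂ) + ε • (Pi.single j 1 : Fin l → ℂ)) j = ε := by
  simp [Pi.single_eq_of_ne hij.symm]

lemma edge_apply_ne {l : ℕ} {i j k : Fin l} (hk : k ≠ i) (hk' : k ≠ j) (ε : ℂ) :
    ((Pi.single i 1 : Fin l → ℂ) + ε • (Pi.single j 1 : Fin l → ℂ)) k = 0 := by
  simp [Pi.single_eq_of_ne hk, Pi.single_eq_of_ne hk']

lemma edge_supp {l : ℕ} {i j k : Fin l} (ε : ℂ)
    (hk : ((Pi.single i 1 : Fin l → ℂ) + ε • (Pi.single j 1 : Fin l → ℂ)) k ≠ 0) :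
    k = i ∨ k = j := by
  by_contra hcon
  push_neg at hcon
  exact hk (edge_apply_ne hcon.1 hcon.2 ε)

lemma special_one {l : ℕ} {c : Fin l → ℂ} (hc : SpecialN c) : ∃ i, c i = 1 := by
  rcases hc with ⟨i, rfl⟩ | ⟨i, j, ε, hij, hε, rfl⟩
  · exact ⟨i, by simp⟩
  · exact ⟨i, edge_apply_left hij.ne ε⟩

lemma special_ne_zero {l : ℕ} {c : Fin l → ℂ} (hc : SpecialN c) : c ≠ 0 := by
  obtain ⟨i, hi⟩ := special_one hc
  intro h
  rw [h] at hi
  simp at hi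

/-- The support of a special vector is contained in a pair. -/
lemma special_supp {l : ℕ} {c : Fin l → ℂ} (hc : SpecialN c) :
    ∃ i j : Fin l, ∀ k, c k ≠ 0 → k = i ∨ k = j := by
  rcases hc with ⟨i, rfl⟩ | ⟨i, j, ε, hij, hε, rfl⟩
  · refine ⟨i, i, fun k hk => ?_⟩
    by_contra hcon
    push_neg at hcon
    exact hk (Pi.single_eq_of_ne hcon.1 _)
  · exact ⟨i, j, fun k hk => edge_supp ε hk⟩

lemma eps_ne_zero {ε : ℂ} (hε : ε = 1 ∨ ε = -1) : ε ≠ 0 := by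
  rcases hε with rfl | rfl <;> norm_num

/-- Two proportional special vectors are equal. -/
lemma special_prop_eq {l : ℕ} {c c' : Fin l → ℂ} (hc : SpecialN c) (hc' : SpecialN c')
    {a : ℂ} (h : ∀ k, c' k = a * c k) : c' = c := by
  obtain ⟨i0, hi0⟩ := special_one hc'
  have ha : a ≠ 0 := by
    intro h0
    have := h i0
    rw [h0, zero_mul, hi0] at this
    exact one_ne_zero this
  have hsupp : ∀ k, c' k ≠ 0 → c k ≠ 0 := fun k hk h0 => hk (by rw [h k, h0, mul_zero])
  have hsupp' : ∀ k, c k ≠ 0 → c' k ≠ 0 := by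
    intro k hk h0
    rw [h k] at h0
    exact hk ((mul_eq_zero.mp h0).resolve_left ha)
  rcases hc with ⟨i, rfl⟩ | ⟨i, j, ε, hij, hε, rfl⟩ <;>
    rcases hc' with ⟨i', rfl⟩ | ⟨i', j', ε', hij', hε', rfl⟩
  · -- single / single
    have hii : i' = i := by
      by_contra hne
      exact hsupp i' (by simp) (Pi.single_eq_of_ne hne _)
    rw [hii]
  · -- c' edge, c single
    have h1 : i' = i := by
      by_contra hne
      exact hsupp i' (by rw [edge_apply_left hij'.ne]; norm_num) (Pi.single_eq_of_ne hne _)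
    have h2 : j' = i := by
      by_contra hne
      exact hsupp j' (by rw [edge_apply_right hij'.ne]; exact eps_ne_zero hε')
        (Pi.single_eq_of_ne hne _)
    exact absurd (h1.trans h2.symm) hij'.ne
  · -- c' single, c edge
    have h1 : i = i' := by
      by_contra hne
      exact hsupp' i (by rw [edge_apply_left hij.ne]; norm_num) (Pi.single_eq_of_ne hne _)
    have h2 : j = i' := by
      by_contra hne
      exact hsupp' j (by rw [edge_apply_right hij.ne]; exact eps_ne_zero hε)
        (Pi.single_eq_of_ne hne _)
    exact absurd (h1.trans h2.symm) hij.ne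
  · -- edge / edge
    have hi'm : i' = i ∨ i' = j :=
      edge_supp ε (hsupp i' (by rw [edge_apply_left hij'.ne]; norm_num))
    have hj'm : j' = i ∨ j' = j :=
      edge_supp ε (hsupp j' (by rw [edge_apply_right hij'.ne]; exact eps_ne_zero hε'))
    have hii : i' = i ∧ j' = j := by
      have o1 : (i:ℕ) < j := hij
      have o2 : (i':ℕ) < j' := hij'
      rcases hi'm with h1 | h1 <;> rcases hj'm with h2 | h2 <;>
        simp only [Fin.ext_iff] at h1 h2 ⊢ <;> omega
    obtain ⟨rfl, rfl⟩ := hii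
    have hvi := h i'
    rw [edge_apply_left hij.ne, edge_apply_left hij.ne, mul_one] at hvi
    have hvj := h j'
    rw [edge_apply_right hij.ne, edge_apply_right hij.ne, ← hvi, one_mul] at hvj
    rw [hvj]

lemma mem_arr {l : ℕ} (G : SGraph l) (H : Hyp l) (hH : H ∈ graphArr G) :
    ∃ c : Fin l → ℂ, SpecialN c ∧ H = LinearMap.ker (lform c) := by
  rw [graphArr, Finset.mem_union] at hH
  rcases hH with h | h
  · obtain ⟨i, _, rfl⟩ := Finset.mem_image.mp h
    exact ⟨Pi.single i 1, Or.inl ⟨i, rfl⟩, by rw [loopHyp, lform_single]⟩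
  · obtain ⟨e, he, rfl⟩ := Finset.mem_image.mp h
    obtain ⟨i, j, b⟩ := e
    have hij : i < j := G.edges_lt _ he
    refine ⟨(Pi.single i 1 : Fin l → ℂ) + (if b then (1:ℂ) else -1) • (Pi.single j 1 : Fin l → ℂ),
      Or.inr ⟨i, j, (if b then (1:ℂ) else -1), hij, (by cases b <;> norm_num), rfl⟩, ?_⟩
    rw [edgeHyp, lform_edge]

lemma collinear_helper {l : ℕ} (u w x y : Fin l → ℂ) (a b a' b' : ℂ) (t : Fin l)
    (hx : ∀ k, x k = a * u k + b * w k) (hy : ∀ k, y k = a' * u k + b' * w k)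
    (hut : u t ≠ 0) (hxt : x t = 0) (hyt : y t = 0) (hx0 : x ≠ 0) :
    ∃ cc : ℂ, ∀ k, y k = cc * x k := by
  have hxs : ∀ k, x k = b * (w k - w t / u t * u k) := by
    intro k
    have h0 := hx t
    rw [hxt] at h0
    have ha : a = -(b * w t) / u t := by
      field_simp
      linear_combination -h0
    rw [hx k, ha]
    field_simp
    ring
  have hb : b ≠ 0 := by
    intro h0
    apply hx0
    funext k
    rw [hxs k, h0, zero_mul]
    rfl
  have hys : ∀ k, y k = b' * (w k - w t / u t * u k) := by
    intro k
    have h0 := hy t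
    rw [hyt] at h0
    have ha : a' = -(b' * w t) / u t := by
      field_simp
      linear_combination -h0
    rw [hy k, ha]
    field_simp
    ring
  refine ⟨b' / b, fun k => ?_⟩
  rw [hys k, hxs k]
  field_simp

lemma special_single_of_small {l : ℕ} {c : Fin l → ℂ} (hc : SpecialN c)
    (hsmall : ∀ k k', c k ≠ 0 → c k' ≠ 0 → k = k') : ∃ i, c = Pi.single i 1 := by
  rcases hc with ⟨i, rfl⟩ | ⟨i, j, ε, hij, hε, rfl⟩
  · exact ⟨i, rfl⟩
  · exact absurd (hsmall i j (by rw [edge_apply_left hij.ne]; exact one_ne_zero)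
      (by rw [edge_apply_right hij.ne]; exact eps_ne_zero hε)) hij.ne

lemma special_pair_mem {l : ℕ} {s t : Fin l} (hst : s < t) {c : Fin l → ℂ} (hc : SpecialN c)
    (hsupp : ∀ k, c k ≠ 0 → k = s ∨ k = t) :
    c ∈ ({Pi.single s 1, Pi.single t 1,
          (Pi.single s 1 : Fin l → ℂ) + (1:ℂ) • (Pi.single t 1 : Fin l → ℂ),
          (Pi.single s 1 : Fin l → ℂ) + (-1:ℂ) • (Pi.single t 1 : Fin l → ℂ)}
        : Finset (Fin l → ℂ)) := by
  rcases hc with ⟨i, rfl⟩ | ⟨i, j, ε, hij, hε, rfl⟩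
  · rcases hsupp i (by simp) with rfl | rfl
    · exact Finset.mem_insert_self _ _
    · exact Finset.mem_insert_of_mem (Finset.mem_insert_self _ _)
  · have hi : i = s ∨ i = t := hsupp i (by rw [edge_apply_left hij.ne]; exact one_ne_zero)
    have hj : j = s ∨ j = t := hsupp j (by rw [edge_apply_right hij.ne]; exact eps_ne_zero hε)
    have hit : i = s ∧ j = t := by
      have o1 : (i:ℕ) < j := hij
      have o2 : (s:ℕ) < t := hst
      rcases hi with h1 | h1 <;> rcases hj with h2 | h2 <;>
        simp only [Fin.ext_iff] at h1 h2 ⊢ <;> omega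
    obtain ⟨rfl, rfl⟩ := hit
    rcases hε with rfl | rfl
    · exact Finset.mem_insert_of_mem (Finset.mem_insert_of_mem (Finset.mem_insert_self _ _))
    · exact Finset.mem_insert_of_mem (Finset.mem_insert_of_mem
        (Finset.mem_insert_of_mem (Finset.mem_singleton_self _)))

lemma card_flat_le {l : ℕ} (G : SGraph l) (H K : Hyp l)
    (hH : H ∈ graphArr G) (hK : K ∈ graphArr G) (hHK : H ≠ K) :
    (flatHyps (graphArr G) (H ⊓ K)).card ≤ 4 := by
  classical
  obtain ⟨u, hu, hHu⟩ := mem_arr G H hH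
  obtain ⟨w, hw, hKw⟩ := mem_arr G K hK
  have hvec : ∀ L : {H // H ∈ graphArr G},
      ∃ c, SpecialN c ∧ (L : Hyp l) = LinearMap.ker (lform c) :=
    fun L => mem_arr G L L.2
  choose v hv1 hv2 using hvec
  have hvinj : ∀ L L' : {H // H ∈ graphArr G}, v L = v L' → L = L' := by
    intro L L' hE
    apply Subtype.ext
    rw [show (L : Hyp l) = _ from hv2 L, show (L' : Hyp l) = _ from hv2 L', hE]
  have hspan : ∀ L ∈ flatHyps (graphArr G) (H ⊓ K),
      ∃ a b : ℂ, ∀ k, v L k = a * u k + b * w k := by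
    intro L hL
    have hXL : H ⊓ K ≤ (L : Hyp l) := (Finset.mem_filter.mp hL).2
    rw [hHu, hKw, hv2 L] at hXL
    obtain ⟨a, b, hab⟩ := ker_le_span2 _ _ _ hXL
    refine ⟨a, b, fun k => ?_⟩
    have h0 := congrArg (fun φ : (Fin l → ℂ) →ₗ[ℂ] ℂ => φ (Pi.single k 1)) hab
    simpa [lform_apply_single] using h0
  set I : Finset (Fin l) := Finset.univ.filter (fun k => u k ≠ 0 ∨ w k ≠ 0) with hI
  have hmemI : ∀ k, k ∈ I ↔ (u k ≠ 0 ∨ w k ≠ 0) := fun k => by rw [hI]; simp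
  have hsuppI : ∀ L ∈ flatHyps (graphArr G) (H ⊓ K), ∀ k, v L k ≠ 0 → k ∈ I := by
    intro L hL k hk
    obtain ⟨a, b, hab⟩ := hspan L hL
    rw [hmemI]
    by_contra hcon
    push_neg at hcon
    exact hk (by rw [hab k, hcon.1, hcon.2, mul_zero, mul_zero, add_zero])
  have hIcard : I.card ≤ 4 := by
    obtain ⟨i1, j1, hu1⟩ := special_supp hu
    obtain ⟨i2, j2, hw1⟩ := special_supp hw
    have hsub : I ⊆ {i1, j1, i2, j2} := by
      intro k hk
      rw [hmemI] at hk
      simp only [Finset.mem_insert, Finset.mem_singleton]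
      rcases hk with hk | hk
      · rcases hu1 k hk with h | h <;> tauto
      · rcases hw1 k hk with h | h <;> tauto
    have c0 := Finset.card_le_card hsub
    have c1 := Finset.card_insert_le i1 ({j1, i2, j2} : Finset (Fin l))
    have c2 := Finset.card_insert_le j1 ({i2, j2} : Finset (Fin l))
    have c3 := Finset.card_insert_le i2 ({j2} : Finset (Fin l))
    have c4 : ({j2} : Finset (Fin l)).card = 1 := Finset.card_singleton _
    omega
  by_cases h3 : 3 ≤ I.card
  · -- inject into I
    obtain ⟨i0, hi0⟩ := special_one hu
    have hne : ∀ L ∈ flatHyps (graphArr G) (H ⊓ K),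
        (I \ Finset.univ.filter (fun k => v L k ≠ 0)).Nonempty := by
      intro L hL
      rw [Finset.sdiff_nonempty]
      intro hsub
      obtain ⟨i1, j1, hvs⟩ := special_supp (hv1 L)
      have hsub2 : I ⊆ {i1, j1} := by
        intro k hk
        have h0 := hsub hk
        simp only [Finset.mem_filter, Finset.mem_univ, true_and] at h0
        simp only [Finset.mem_insert, Finset.mem_singleton]
        rcases hvs k h0 with h | h <;> tauto
      have c0 := Finset.card_le_card hsub2
      have c1 := Finset.card_insert_le i1 ({j1} : Finset (Fin l))
      have c2 : ({j1} : Finset (Fin l)).card = 1 := Finset.card_singleton _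
      omega
    set f : {H // H ∈ graphArr G} → Fin l := fun L =>
      if h : (I \ Finset.univ.filter (fun k => v L k ≠ 0)).Nonempty then h.choose else i0
      with hf
    have hfmem : ∀ L ∈ flatHyps (graphArr G) (H ⊓ K), f L ∈ I ∧ v L (f L) = 0 := by
      intro L hL
      have hne' := hne L hL
      have hch := hne'.choose_spec
      rw [Finset.mem_sdiff] at hch
      have hfL : f L = hne'.choose := by rw [hf]; simp only [dif_pos hne']
      rw [hfL]
      refine ⟨hch.1, ?_⟩
      have h0 := hch.2
      simp only [Finset.mem_filter, Finset.mem_univ, true_and, not_not] at h0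
      exact h0
    refine le_trans (Finset.card_le_card_of_injOn f
      (fun L hL => (hfmem L hL).1) ?_) hIcard
    intro L hL L' hL' hff
    have h1 := hfmem L hL
    have h2 := hfmem L' hL'
    rw [hff] at h1
    set t := f L' with ht
    have htI : u t ≠ 0 ∨ w t ≠ 0 := (hmemI t).mp h2.1
    obtain ⟨a, b, hab⟩ := hspan L hL
    obtain ⟨a', b', hab'⟩ := hspan L' hL'
    have hcc : ∃ cc : ℂ, ∀ k, v L' k = cc * v L k := by
      rcases htI with hut | hwt
      · exact collinear_helper u w (v L) (v L') a b a' b' t hab hab' hut h1.2 h2.2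
          (special_ne_zero (hv1 L))
      · exact collinear_helper w u (v L) (v L') b a b' a' t
          (fun k => by rw [hab k]; ring) (fun k => by rw [hab' k]; ring)
          hwt h1.2 h2.2 (special_ne_zero (hv1 L))
    obtain ⟨cc, hcc⟩ := hcc
    exact (hvinj L L' (special_prop_eq (hv1 L) (hv1 L') hcc).symm)
  · push_neg at h3
    have huw : u ≠ w := fun hE => hHK (by rw [hHu, hKw, hE])
    have hcard2 : I.card = 2 := by
      rcases Nat.lt_or_ge I.card 2 with hc | hc
      · exfalso
        have hsmall : ∀ k k', k ∈ I → k' ∈ I → k = k' := by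
          intro k k' hk hk'
          have := Finset.card_le_one.mp (by omega : I.card ≤ 1)
          exact this k hk k' hk'
        obtain ⟨i1, hu1⟩ := special_single_of_small hu
          (fun k k' hk hk' => hsmall k k' ((hmemI k).mpr (Or.inl hk))
            ((hmemI k').mpr (Or.inl hk')))
        obtain ⟨i2, hw1⟩ := special_single_of_small hw
          (fun k k' hk hk' => hsmall k k' ((hmemI k).mpr (Or.inr hk))
            ((hmemI k').mpr (Or.inr hk')))
        have hi12 : i1 = i2 := by
          apply hsmall
          · rw [hmemI]; left; rw [hu1]; simp
          · rw [hmemI]; right; rw [hw1]; simp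
        exact huw (by rw [hu1, hw1, hi12])
      · omega
    have hex : ∃ s t : Fin l, s < t ∧ I = {s, t} := by
      obtain ⟨s, t, hst, hIst⟩ := Finset.card_eq_two.mp hcard2
      rcases hst.lt_or_gt with h | h
      · exact ⟨s, t, h, hIst⟩
      · exact ⟨t, s, h, by rw [hIst, Finset.pair_comm]⟩
    obtain ⟨s, t, hst, hIst⟩ := hex
    have hT4 : ({Pi.single s 1, Pi.single t 1,
          (Pi.single s 1 : Fin l → ℂ) + (1:ℂ) • (Pi.single t 1 : Fin l → ℂ),
          (Pi.single s 1 : Fin l → ℂ) + (-1:ℂ) • (Pi.single t 1 : Fin l → ℂ)}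
        : Finset (Fin l → ℂ)).card ≤ 4 := by
      have c1 := Finset.card_insert_le (Pi.single s 1 : Fin l → ℂ)
        ({Pi.single t 1,
          (Pi.single s 1 : Fin l → ℂ) + (1:ℂ) • (Pi.single t 1 : Fin l → ℂ),
          (Pi.single s 1 : Fin l → ℂ) + (-1:ℂ) • (Pi.single t 1 : Fin l → ℂ)}
          : Finset (Fin l → ℂ))
      have c2 := Finset.card_insert_le (Pi.single t 1 : Fin l → ℂ)
        ({(Pi.single s 1 : Fin l → ℂ) + (1:ℂ) • (Pi.single t 1 : Fin l → ℂ),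
          (Pi.single s 1 : Fin l → ℂ) + (-1:ℂ) • (Pi.single t 1 : Fin l → ℂ)}
          : Finset (Fin l → ℂ))
      have c3 := Finset.card_insert_le
        ((Pi.single s 1 : Fin l → ℂ) + (1:ℂ) • (Pi.single t 1 : Fin l → ℂ))
        ({(Pi.single s 1 : Fin l → ℂ) + (-1:ℂ) • (Pi.single t 1 : Fin l → ℂ)}
          : Finset (Fin l → ℂ))
      have c4 := Finset.card_singleton
        ((Pi.single s 1 : Fin l → ℂ) + (-1:ℂ) • (Pi.single t 1 : Fin l → ℂ))
      omega
    refine le_trans (Finset.card_le_card_of_injOn v ?_ ?_) hT4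
    · intro L hL
      refine special_pair_mem hst (hv1 L) (fun k hk => ?_)
      have := hsuppI L hL k hk
      rw [hIst] at this
      simpa using this
    · intro L _ L' _ hE
      exact hvinj L L' hE

/-- Let `Γ` be a graph in `[l]` and let `p` be a prime with `p ∉ {2, 3}`. Then every
`p`-cocycle `η : A(Γ) → 𝔽_p` is constant on `A(Γ)`; that is, `β_p(Γ) = 0`. -/
theorem betaP_vanishes_p_ne_two_three {l : ℕ} (G : SGraph l)
    (p : ℕ) (hp : p.Prime) (hp2 : p ≠ 2) (hp3 : p ≠ 3)
    (η : {H // H ∈ graphArr G} → ZMod p) (hη : IsCocycle p (graphArr G) η) :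
    ∀ H K : {H // H ∈ graphArr G}, η H = η K := by
  intro H K
  by_cases hHK : H = K
  · rw [hHK]
  · have hne : (H : Hyp l) ≠ (K : Hyp l) := fun h => hHK (Subtype.ext h)
    have hflat : IsRank2Flat (graphArr G) ((H : Hyp l) ⊓ (K : Hyp l)) :=
      ⟨H, H.2, K, K.2, hne, rfl⟩
    have hHm : H ∈ flatHyps (graphArr G) ((H : Hyp l) ⊓ (K : Hyp l)) :=
      Finset.mem_filter.mpr ⟨Finset.mem_attach _ _, inf_le_left⟩
    have hKm : K ∈ flatHyps (graphArr G) ((H : Hyp l) ⊓ (K : Hyp l)) :=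
      Finset.mem_filter.mpr ⟨Finset.mem_attach _ _, inf_le_right⟩
    have hcard := card_flat_le G H.1 K.1 H.2 K.2 hne
    have hp5 : 5 ≤ p := by
      have h2 := hp.two_le
      rcases Nat.lt_or_ge p 5 with h | h
      · interval_cases p
        · exact absurd rfl hp2
        · exact absurd rfl hp3
        · norm_num at hp
      · exact h
    have hnd : ¬ p ∣ (flatHyps (graphArr G) ((H : Hyp l) ⊓ (K : Hyp l))).card := by
      intro hd
      have h0 := Nat.eq_zero_of_dvd_of_lt hd (by omega)
      exact (Finset.card_ne_zero_of_mem hHm) h0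
    exact (hη _ hflat).2 hnd H hHm K hKm
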